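/- Let v_1, v_2, v_3, v_4 ∈ F^3 be vectors such that every three of them span F^3. Suppose v_1, v_2, v_3 are eigenvectors of a ∈ M_3(F) with eigenvalues α_1, α_2, α_3 respectively, and that the plane F·v_1 + F·v_4 is invariant under a. Then α_2 = α_3. -/

import Mathlib

theorem stmt_17 (F : Type*) [Field F] (v : Fin 4 → (Fin 3 → F))
    (hspan : ∀ i j k : Fin 4, i ≠ j → i ≠ k → j ≠ k →
      Submodule.span F {v i, v j, v k} = ⊤)
    (a : Matrix (Fin 3) (Fin 3) F) (α₁ α₂ α₃ : F)
    (h₁ : a.mulVec (v 0) = α₁ • v 0)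
    (h₂ : a.mulVec (v 1) = α₂ • v 1)
    (h₃ : a.mulVec (v 2) = α₃ • v 2)
    (hinv : (Submodule.span F {v 0, v 3}).map a.mulVecLin ≤
      Submodule.span F {v 0, v 3}) :
    α₂ = α₃ := by
  have hrange : Set.range ![v 0, v 1, v 2] = {v 0, v 1, v 2} := by
    simp [Matrix.range_cons, Matrix.range_empty]
    ext x; simp; tauto
  have hspan012 : ⊤ ≤ Submodule.span F (Set.range ![v 0, v 1, v 2]) := by
    rw [hrange, hspan 0 1 2 (by decide) (by decide) (by decide)]
  have hcard : Fintype.card (Fin 3) = Module.finrank F (Fin 3 → F) := by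
    simp [Module.finrank_fintype_fun_eq_card]
  let b : Module.Basis (Fin 3) F (Fin 3 → F) :=
    basisOfTopLeSpanOfCardEqFinrank ![v 0, v 1, v 2] hspan012 hcard
  have hb : ⇑b = ![v 0, v 1, v 2] := coe_basisOfTopLeSpanOfCardEqFinrank _ _ _
  set c : Fin 3 → F := fun i => b.repr (v 3) i with hc
  have hv3 : v 3 = c 0 • v 0 + c 1 • v 1 + c 2 • v 2 := by
    have := b.sum_repr (v 3)
    rw [Fin.sum_univ_three] at this
    rw [← this, hb]
    simp
    rfl
  have hli := b.linearIndependent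
  -- c 1 ≠ 0
  have hc1 : c 1 ≠ 0 := by
    intro h0
    have hmem : v 3 ∈ Submodule.span F {v 0, v 2} := by
      rw [hv3, h0, zero_smul, add_zero]
      exact Submodule.add_mem _
        (Submodule.smul_mem _ _ (Submodule.subset_span (by simp)))
        (Submodule.smul_mem _ _ (Submodule.subset_span (by simp)))
    have htop : Submodule.span F {v 0, v 2, v 3} ≤ Submodule.span F {v 0, v 2} := by
      rw [Submodule.span_le]
      rintro x (rfl | rfl | rfl) <;>
        first
          | exact hmem
          | exact Submodule.subset_span (by simp)
    rw [hspan 0 2 3 (by decide) (by decide) (by decide)] at htop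
    have hv1 : v 1 ∈ Submodule.span F {v 0, v 2} := htop Submodule.mem_top
    have := hli.notMem_span_image (s := {0, 2}) (x := 1) (by decide)
    apply this
    have himg : ⇑b '' {0, 2} = {v 0, v 2} := by
      rw [hb]; simp [Set.image_insert_eq]
    rw [himg, hb]
    simpa using hv1
  -- c 2 ≠ 0
  have hc2 : c 2 ≠ 0 := by
    intro h0
    have hmem : v 3 ∈ Submodule.span F {v 0, v 1} := by
      rw [hv3, h0, zero_smul, add_zero]
      exact Submodule.add_mem _
        (Submodule.smul_mem _ _ (Submodule.subset_span (by simp)))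
        (Submodule.smul_mem _ _ (Submodule.subset_span (by simp)))
    have htop : Submodule.span F {v 0, v 1, v 3} ≤ Submodule.span F {v 0, v 1} := by
      rw [Submodule.span_le]
      rintro x (rfl | rfl | rfl) <;>
        first
          | exact hmem
          | exact Submodule.subset_span (by simp)
    rw [hspan 0 1 3 (by decide) (by decide) (by decide)] at htop
    have hv2 : v 2 ∈ Submodule.span F {v 0, v 1} := htop Submodule.mem_top
    have := hli.notMem_span_image (s := {0, 1}) (x := 2) (by decide)
    apply this
    have himg : ⇑b '' {0, 1} = {v 0, v 1} := by
      rw [hb]; simp [Set.image_insert_eq]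
    rw [himg, hb]
    simpa using hv2
  -- a (v 3) ∈ span {v 0, v 3}
  have hmem : a.mulVec (v 3) ∈ Submodule.span F {v 0, v 3} := by
    apply hinv
    exact Submodule.mem_map_of_mem (Submodule.subset_span (by simp))
  rw [Submodule.mem_span_pair] at hmem
  obtain ⟨s, t, hst⟩ := hmem
  -- compute a (v 3)
  have hav3 : a.mulVec (v 3) = (c 0 * α₁) • v 0 + (c 1 * α₂) • v 1 + (c 2 * α₃) • v 2 := by
    rw [hv3]
    simp only [Matrix.mulVec_add, Matrix.mulVec_smul, h₁, h₂, h₃, smul_smul]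
  rw [hav3] at hst
  rw [hv3] at hst
  have key : ∀ g : Fin 3 → F, (∑ i, g i • ![v 0, v 1, v 2] i) = 0 → ∀ i, g i = 0 := by
    have := Fintype.linearIndependent_iff.mp (hb ▸ hli)
    exact this
  have hzero : (∑ i, (![s + t * c 0 - c 0 * α₁, t * c 1 - c 1 * α₂, t * c 2 - c 2 * α₃] : Fin 3 → F) i • ![v 0, v 1, v 2] i) = 0 := by
    rw [Fin.sum_univ_three]
    simp only [Matrix.cons_val_zero, Matrix.cons_val_one, Matrix.head_cons,
      Matrix.cons_val_two, Matrix.tail_cons]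
    linear_combination (norm := module) hst
  have h1 := key _ hzero 1
  have h2 := key _ hzero 2
  have h1' : t * c 1 - c 1 * α₂ = 0 := h1
  have h2' : t * c 2 - c 2 * α₃ = 0 := h2
  have ht2 : t = α₂ := by
    have : c 1 * t = c 1 * α₂ := by linear_combination h1'
    exact mul_left_cancel₀ hc1 this
  have ht3 : t = α₃ := by
    have : c 2 * t = c 2 * α₃ := by linear_combination h2'
    exact mul_left_cancel₀ hc2 this
  rw [← ht2, ht3]
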